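/- Let α, β ∈ ℝ, set γ := α + β − 1, and let y1, y2, y3 ∈ ℝ with y1 ≠ 0, y2 ≠ 0, y3 ≠ 0, γ·y1 + α·y2 ≠ 0 and β·y2 + γ·y3 ≠ 0. Then 1/(y1·y2·y3) − γ²/(y2·(γ·y1 + α·y2)·(β·y2 + γ·y3)) = (β·γ·y1 + α·β·y2 + α·γ·y3)/(y1·y3·(γ·y1 + α·y2)·(β·y2 + γ·y3)). -/

import Mathlib

theorem stmt_4 (α β : ℝ) (y1 y2 y3 : ℝ)
    (h1 : y1 ≠ 0) (h2 : y2 ≠ 0) (h3 : y3 ≠ 0)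
    (h4 : (α + β - 1) * y1 + α * y2 ≠ 0) (h5 : β * y2 + (α + β - 1) * y3 ≠ 0) :
    1 / (y1 * y2 * y3) -
      (α + β - 1) ^ 2 /
        (y2 * ((α + β - 1) * y1 + α * y2) * (β * y2 + (α + β - 1) * y3)) =
    (β * (α + β - 1) * y1 + α * β * y2 + α * (α + β - 1) * y3) /
      (y1 * y3 * ((α + β - 1) * y1 + α * y2) * (β * y2 + (α + β - 1) * y3)) := by
  rw [div_sub_div _ _ (mul_ne_zero (mul_ne_zero h1 h2) h3) (mul_ne_zero (mul_ne_zero h2 h4) h5),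
    div_eq_div_iff (mul_ne_zero (mul_ne_zero (mul_ne_zero h1 h2) h3) (mul_ne_zero (mul_ne_zero h2 h4) h5))
      (mul_ne_zero (mul_ne_zero (mul_ne_zero h1 h3) h4) h5)]
  ring
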